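/- Σ_{i=1}^n ‖C X_i‖² = n − 1 + tr(φ ∘ B), where φ ∘ B is regarded as a linear endomorphism of V⊥ (it maps V⊥ into V⊥ since B takes values in V and φ(V) ⊆ V⊥). Consequently Σ_{i,j=1}^n ⟨C X_i, X_j⟩² = n − 1 + tr(φ ∘ B). -/

import Mathlib

open scoped RealInnerProductSpace

/-- `Σ ‖C Xᵢ‖² = n - 1 + tr(φ ∘ B)` for an anti-invariant vertical distribution
with horizontal Reeb vector field. -/
theorem stmt_18 {E : Type*} [NormedAddCommGroup E] [InnerProductSpace ℝ E]
    [FiniteDimensional ℝ E]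
    (ξ : E) (hξ : ‖ξ‖ = 1) (η : E → ℝ) (hη : ∀ X, η X = ⟪X, ξ⟫)
    (φ : E →ₗ[ℝ] E) (hskew : ∀ X Y, ⟪φ X, Y⟫ = -⟪X, φ Y⟫)
    (hφ2 : ∀ X, φ (φ X) = -X + η X • ξ)
    (V : Submodule ℝ E) (hξV : ξ ∈ Vᗮ) (hanti : ∀ v ∈ V, φ v ∈ Vᗮ)
    (B C : E → E)
    (hB : ∀ x, B x = (V.orthogonalProjectionOnto (φ x) : E))
    (hC : ∀ x, C x = (Vᗮ.orthogonalProjectionOnto (φ x) : E))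
    (n : ℕ) (X : OrthonormalBasis (Fin n) ℝ ↥Vᗮ)
    (F : ↥Vᗮ →ₗ[ℝ] ↥Vᗮ) (hF : ∀ x : ↥Vᗮ, (F x : E) = φ (B (x : E))) :
    (∑ i, ‖C (X i : E)‖ ^ 2 = (n : ℝ) - 1 + LinearMap.trace ℝ ↥Vᗮ F) ∧
    (∑ i, ∑ j, ⟪C (X i : E), (X j : E)⟫ ^ 2 = (n : ℝ) - 1 + LinearMap.trace ℝ ↥Vᗮ F) := by
  have hCmem : ∀ e : E, C e ∈ Vᗮ := by
    intro e; rw [hC]; exact (Vᗮ.orthogonalProjectionOnto (φ e)).2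
  -- pointwise key identity
  have key : ∀ x : ↥Vᗮ, ‖C (x : E)‖ ^ 2
      = ‖(x : E)‖ ^ 2 - ⟪(x : E), ξ⟫ ^ 2 + ⟪(F x : E), (x : E)⟫ := by
    intro x
    set e : E := (x : E) with he
    have hBmem : B e ∈ V := by rw [hB]; exact (V.orthogonalProjectionOnto (φ e)).2
    have hdec : B e + C e = φ e := by
      rw [hB, hC]; exact V.starProjection_add_starProjection_orthogonal (φ e)
    have hBC : ⟪B e, C e⟫ = 0 := (hCmem e) _ hBmem
    have h1 : ⟪φ e, φ e⟫ = ‖e‖ ^ 2 - ⟪e, ξ⟫ ^ 2 := by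
      rw [hskew e (φ e), hφ2 e, inner_add_right, inner_neg_right,
        real_inner_smul_right, hη, real_inner_self_eq_norm_sq]
      ring
    have h2 : ⟪φ (B e), e⟫ = -⟪B e, φ e⟫ := hskew (B e) e
    have h3 : ⟪(F x : E), e⟫ = -⟪B e, φ e⟫ := by rw [hF x, ← he, h2]
    have h4 : ⟪B e + C e, B e + C e⟫ = ⟪B e, B e⟫ + 2 * ⟪B e, C e⟫ + ⟪C e, C e⟫ := by
      simp only [inner_add_left, inner_add_right, real_inner_comm (B e) (C e)]; ring
    have h5 : ⟪B e, B e + C e⟫ = ⟪B e, B e⟫ + ⟪B e, C e⟫ := inner_add_right _ _ _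
    rw [hdec] at h4 h5
    have h6 : ‖C e‖ ^ 2 = ⟪C e, C e⟫ := (real_inner_self_eq_norm_sq _).symm
    rw [h6]
    nlinarith [h1, h3, h4, h5, hBC]
  -- norms of basis vectors
  have hnorm : ∀ i, ‖(X i : E)‖ = 1 := by
    intro i
    have := X.orthonormal.1 i
    exact this
  -- Parseval for ξ
  set ξ' : ↥Vᗮ := ⟨ξ, hξV⟩ with hξ'
  have hξnorm : ∑ i, ⟪(X i : E), ξ⟫ ^ 2 = 1 := by
    have h := X.sum_inner_mul_inner ξ' ξ'
    have h2 : ∀ i, ⟪ξ', X i⟫ * ⟪X i, ξ'⟫ = ⟪(X i : E), ξ⟫ ^ 2 := by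
      intro i
      have e1 : ⟪ξ', X i⟫ = ⟪ξ, (X i : E)⟫ := rfl
      have e2 : ⟪X i, ξ'⟫ = ⟪(X i : E), ξ⟫ := rfl
      rw [e1, e2, real_inner_comm ξ]; ring
    rw [Finset.sum_congr rfl (fun i _ => h2 i)] at h
    rw [h]
    have : ⟪ξ', ξ'⟫ = ⟪ξ, ξ⟫ := rfl
    rw [this, real_inner_self_eq_norm_sq, hξ]; norm_num
  -- trace formula
  have htrace : LinearMap.trace ℝ ↥Vᗮ F = ∑ i, ⟪(F (X i) : E), (X i : E)⟫ := by
    rw [LinearMap.trace_eq_matrix_trace ℝ X.toBasis F, Matrix.trace]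
    apply Finset.sum_congr rfl
    intro i _
    rw [Matrix.diag_apply, LinearMap.toMatrix_apply, X.coe_toBasis_repr_apply,
      X.coe_toBasis, X.repr_apply_apply]
    exact real_inner_comm _ _
  have main : ∑ i, ‖C (X i : E)‖ ^ 2 = (n : ℝ) - 1 + LinearMap.trace ℝ ↥Vᗮ F := by
    rw [Finset.sum_congr rfl (fun i _ => key (X i)), htrace]
    rw [Finset.sum_add_distrib, Finset.sum_sub_distrib]
    simp only [hnorm]
    rw [hξnorm]
    simp [Finset.card_univ]
  refine ⟨main, ?_⟩
  rw [← main]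
  apply Finset.sum_congr rfl
  intro i _
  -- Parseval for C (X i)
  set c : ↥Vᗮ := ⟨C (X i : E), hCmem _⟩ with hc
  have h := X.sum_inner_mul_inner c c
  have h2 : ∀ j, ⟪c, X j⟫ * ⟪X j, c⟫ = ⟪C (X i : E), (X j : E)⟫ ^ 2 := by
    intro j
    have e1 : ⟪c, X j⟫ = ⟪C (X i : E), (X j : E)⟫ := rfl
    have e2 : ⟪X j, c⟫ = ⟪(X j : E), C (X i : E)⟫ := rfl
    rw [e1, e2, real_inner_comm ((X j : E))]; ring
  rw [Finset.sum_congr rfl (fun j _ => h2 j)] at h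
  rw [h]
  have : ⟪c, c⟫ = ⟪C (X i : E), C (X i : E)⟫ := rfl
  rw [this, real_inner_self_eq_norm_sq]
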